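/- (No-bad-node lemma) Let G be a bipartite graph with positive integer edge weights, maximum weight N, and h ∈ [1,N]. Let C_h be a minimum weight cover of G_h (edges of weight ≥ N−h+1, reduced by N−h). Then there exists a minimum weight cover C of G such that C(u) ≥ C_h(u) for every node u. -/
import Mathlib


open Finset

variable {V : Type*} [Fintype V] [DecidableEq V]

/-- `C` is a (weighted vertex) cover of the bipartite graph on parts `X`, `Y`
with edge weights `w` (where `w x y = 0` means no edge). -/
def IsCover (X Y : Finset V) (w : V → V → ℕ) (C : V → ℕ) : Prop :=
  ∀ x ∈ X, ∀ y ∈ Y, w x y ≤ C x + C y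

/-- The weight of a cover: the sum of its values over all nodes. -/
def coverWt (X Y : Finset V) (C : V → ℕ) : ℕ := ∑ u ∈ X ∪ Y, C u

/-- `M` is a matching of the weighted bipartite graph: a set of pairwise
node-disjoint edges, each going from `X` to `Y` with positive weight. -/
def IsBMatching (X Y : Finset V) (w : V → V → ℕ) (M : Finset (V × V)) : Prop :=
  (∀ e ∈ M, e.1 ∈ X ∧ e.2 ∈ Y ∧ 0 < w e.1 e.2) ∧
  (∀ e ∈ M, ∀ f ∈ M, e ≠ f → e.1 ≠ f.1 ∧ e.2 ≠ f.2)

/-- The total weight of a matching. -/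
def mWt (w : V → V → ℕ) (M : Finset (V × V)) : ℕ := ∑ e ∈ M, w e.1 e.2

open Classical in
/-- The maximum weight of a matching of the bipartite graph `(X, Y, w)`. -/
noncomputable def mwm (X Y : Finset V) (w : V → V → ℕ) : ℕ :=
  Finset.sup ((Finset.univ : Finset (V × V)).powerset.filter fun M => IsBMatching X Y w M)
    fun M => mWt w M

/-- The minimum weight of a cover of the bipartite graph `(X, Y, w)`. -/
noncomputable def mwc (X Y : Finset V) (w : V → V → ℕ) : ℕ :=
  sInf {n : ℕ | ∃ C : V → ℕ, IsCover X Y w C ∧ coverWt X Y C = n}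

set_option linter.unusedSectionVars false in
lemma matched_sum_eq {M : Finset (V × V)}
    (hinj : ∀ e ∈ M, ∀ f ∈ M, e ≠ f → e.1 ≠ f.1 ∧ e.2 ≠ f.2)
    (hdisj : Disjoint (M.image Prod.fst) (M.image Prod.snd)) (C : V → ℕ) :
    ∑ u ∈ M.image Prod.fst ∪ M.image Prod.snd, C u = ∑ e ∈ M, (C e.1 + C e.2) := by
  rw [Finset.sum_union hdisj, Finset.sum_image, Finset.sum_image, ← Finset.sum_add_distrib]
  · intro x hx y hy hxy
    by_contra hne
    exact (hinj x hx y hy hne).2 hxy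
  · intro x hx y hy hxy
    by_contra hne
    exact (hinj x hx y hy hne).1 hxy

lemma mWt_le_coverWt {X Y : Finset V} (hXY : Disjoint X Y) {w : V → V → ℕ}
    {M : Finset (V × V)} {C : V → ℕ}
    (hM : IsBMatching X Y w M) (hC : IsCover X Y w C) :
    mWt w M ≤ coverWt X Y C := by
  have hsub1 : M.image Prod.fst ⊆ X := by
    intro u hu
    obtain ⟨e, he, rfl⟩ := Finset.mem_image.mp hu
    exact (hM.1 e he).1
  have hsub2 : M.image Prod.snd ⊆ Y := by
    intro u hu
    obtain ⟨e, he, rfl⟩ := Finset.mem_image.mp hu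
    exact (hM.1 e he).2.1
  have hdisj : Disjoint (M.image Prod.fst) (M.image Prod.snd) :=
    hXY.mono hsub1 hsub2
  calc mWt w M ≤ ∑ e ∈ M, (C e.1 + C e.2) := by
        apply Finset.sum_le_sum
        intro e he
        exact hC e.1 (hM.1 e he).1 e.2 (hM.1 e he).2.1
    _ = ∑ u ∈ M.image Prod.fst ∪ M.image Prod.snd, C u := (matched_sum_eq hM.2 hdisj C).symm
    _ ≤ coverWt X Y C := Finset.sum_le_sum_of_subset (Finset.union_subset_union hsub1 hsub2)


/-- The no-bad-node lemma: there is a minimum weight cover `C` of `G` with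
`C(u) ≥ C_h(u)` for every node `u`. -/
theorem exists_min_cover_no_bad_node
    (X Y : Finset V) (hXY : Disjoint X Y) (w : V → V → ℕ) (N h : ℕ)
    (hwN : ∀ x ∈ X, ∀ y ∈ Y, w x y ≤ N) (hNmax : ∃ x ∈ X, ∃ y ∈ Y, w x y = N)
    (h1 : 1 ≤ h) (hN : h ≤ N)
    (Ch : V → ℕ)
    (hCh : IsCover X Y (fun x y => w x y - (N - h)) Ch)
    (hChmin : ∀ C' : V → ℕ, IsCover X Y (fun x y => w x y - (N - h)) C' →
      coverWt X Y Ch ≤ coverWt X Y C')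
    (hKE : ∀ w' : V → V → ℕ, ∃ (C : V → ℕ) (M : Finset (V × V)),
      IsCover X Y w' C ∧ IsBMatching X Y w' M ∧ mWt w' M = coverWt X Y C) :
    ∃ C : V → ℕ, IsCover X Y w C ∧
      (∀ C' : V → ℕ, IsCover X Y w C' → coverWt X Y C ≤ coverWt X Y C') ∧
      (∀ u ∈ X ∪ Y, Ch u ≤ C u) := by
  classical
  set n0 := N - h with hn0
  set w' : V → V → ℕ := fun x y => w x y - n0 with hw'def
  obtain ⟨C0, M0, hC0, hM0, hEq0⟩ := hKE w
  obtain ⟨Cs, M, hCs, hM, hEqs⟩ := hKE w'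
  -- C0 is a minimum cover of G
  have hC0min : ∀ C' : V → ℕ, IsCover X Y w C' → coverWt X Y C0 ≤ coverWt X Y C' := by
    intro C' hC'
    rw [← hEq0]
    exact mWt_le_coverWt hXY hM0 hC'
  -- matching M achieves the min cover weight of G_h
  have hMCh : mWt w' M = coverWt X Y Ch := by
    refine le_antisymm (mWt_le_coverWt hXY hM hCh) ?_
    rw [hEqs]
    exact hChmin Cs hCs
  -- matched vertex sets
  set S1 := M.image Prod.fst with hS1def
  set S2 := M.image Prod.snd with hS2def
  have hsub1 : S1 ⊆ X := by
    intro u hu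
    obtain ⟨e, he, rfl⟩ := Finset.mem_image.mp hu
    exact (hM.1 e he).1
  have hsub2 : S2 ⊆ Y := by
    intro u hu
    obtain ⟨e, he, rfl⟩ := Finset.mem_image.mp hu
    exact (hM.1 e he).2.1
  have hdisj : Disjoint S1 S2 := hXY.mono hsub1 hsub2
  have hsub : S1 ∪ S2 ⊆ X ∪ Y := Finset.union_subset_union hsub1 hsub2
  -- complementary slackness
  have hle1 : ∀ e ∈ M, w' e.1 e.2 ≤ Ch e.1 + Ch e.2 := by
    intro e he
    exact hCh e.1 (hM.1 e he).1 e.2 (hM.1 e he).2.1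
  have hchain : mWt w' M ≤ ∑ e ∈ M, (Ch e.1 + Ch e.2) := Finset.sum_le_sum hle1
  have hmid : ∑ e ∈ M, (Ch e.1 + Ch e.2) = ∑ u ∈ S1 ∪ S2, Ch u :=
    (matched_sum_eq hM.2 hdisj Ch).symm
  have hchain2 : ∑ u ∈ S1 ∪ S2, Ch u ≤ coverWt X Y Ch :=
    Finset.sum_le_sum_of_subset hsub
  have heq1 : mWt w' M = ∑ e ∈ M, (Ch e.1 + Ch e.2) := by omega
  have heq2 : ∑ u ∈ S1 ∪ S2, Ch u = coverWt X Y Ch := by omega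
  -- each matched edge is tight
  have htight : ∀ e ∈ M, w' e.1 e.2 = Ch e.1 + Ch e.2 := by
    have := (Finset.sum_eq_sum_iff_of_le hle1).mp heq1
    exact this
  -- unmatched vertices have Ch = 0
  have hzero : ∀ u ∈ X ∪ Y, u ∉ S1 ∪ S2 → Ch u = 0 := by
    have hsd : ∑ u ∈ (X ∪ Y) \ (S1 ∪ S2), Ch u = 0 := by
      have := Finset.sum_sdiff (f := Ch) hsub
      rw [heq2] at this
      unfold coverWt at this
      omega
    intro u hu hnu
    exact Finset.sum_eq_zero_iff.mp hsd u (Finset.mem_sdiff.mpr ⟨hu, hnu⟩)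
  -- key numeric fact per matched edge
  have hkey : ∀ e ∈ M, Ch e.1 + Ch e.2 + n0 ≤ C0 e.1 + C0 e.2 := by
    intro e he
    have hpos : 0 < w' e.1 e.2 := (hM.1 e he).2.2
    have ht := htight e he
    have hc := hC0 e.1 (hM.1 e he).1 e.2 (hM.1 e he).2.1
    simp only [hw'def] at hpos ht
    omega
  -- the adjusted cover
  set C1 : V → ℕ := fun u =>
    if h1 : ∃ e ∈ M, e.1 = u then
      C0 u + (Ch u - C0 u) - (Ch h1.choose.2 - C0 h1.choose.2)
    else if h2 : ∃ e ∈ M, e.2 = u then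
      C0 u + (Ch u - C0 u) - (Ch h2.choose.1 - C0 h2.choose.1)
    else C0 u
    with hC1def
  -- values on matched edges
  have hval : ∀ e ∈ M,
      C1 e.1 = C0 e.1 + (Ch e.1 - C0 e.1) - (Ch e.2 - C0 e.2) ∧
      C1 e.2 = C0 e.2 + (Ch e.2 - C0 e.2) - (Ch e.1 - C0 e.1) := by
    intro e he
    have hex1 : ∃ f ∈ M, f.1 = e.1 := ⟨e, he, rfl⟩
    have hex2 : ∃ f ∈ M, f.2 = e.2 := ⟨e, he, rfl⟩
    have hnex : ¬ ∃ f ∈ M, f.1 = e.2 := by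
      rintro ⟨f, hf, hfe⟩
      have h1' : f.1 ∈ X := (hM.1 f hf).1
      have h2' : e.2 ∈ Y := (hM.1 e he).2.1
      rw [hfe] at h1'
      exact Finset.disjoint_left.mp hXY h1' h2'
    constructor
    · have hc := hex1.choose_spec
      have : hex1.choose = e := by
        by_contra hne
        exact (hM.2 _ hc.1 e he hne).1 hc.2
      simp only [hC1def, dif_pos hex1, this]
    · have hc := hex2.choose_spec
      have : hex2.choose = e := by
        by_contra hne
        exact (hM.2 _ hc.1 e he hne).2 hc.2
      simp only [hC1def, dif_neg hnex, dif_pos hex2, this]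
  -- value on unmatched vertices
  have hvalu : ∀ u, u ∉ S1 ∪ S2 → C1 u = C0 u := by
    intro u hu
    rw [Finset.mem_union] at hu
    push_neg at hu
    have h1' : ¬ ∃ e ∈ M, e.1 = u := by
      rintro ⟨e, he, rfl⟩
      exact hu.1 (Finset.mem_image_of_mem _ he)
    have h2' : ¬ ∃ e ∈ M, e.2 = u := by
      rintro ⟨e, he, rfl⟩
      exact hu.2 (Finset.mem_image_of_mem _ he)
    simp only [hC1def, dif_neg h1', dif_neg h2']
  -- domination and structural properties
  have hprops : ∀ u ∈ X ∪ Y, Ch u ≤ C1 u ∧ (C0 u ≤ C1 u ∨ Ch u + n0 ≤ C1 u) := by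
    intro u hu
    by_cases hmu : u ∈ S1 ∪ S2
    · rw [Finset.mem_union] at hmu
      rcases hmu with hmu | hmu
      · obtain ⟨e, he, rfl⟩ := Finset.mem_image.mp hmu
        have hv := (hval e he).1
        have hk := hkey e he
        rw [hv]
        omega
      · obtain ⟨e, he, rfl⟩ := Finset.mem_image.mp hmu
        have hv := (hval e he).2
        have hk := hkey e he
        rw [hv]
        omega
    · have hz := hzero u hu hmu
      rw [hvalu u hmu]
      omega
  -- C1 is a cover of G
  have hcover : IsCover X Y w C1 := by
    intro x hx y hy
    have hpx := hprops x (Finset.mem_union_left _ hx)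
    have hpy := hprops y (Finset.mem_union_right _ hy)
    have hc0 := hC0 x hx y hy
    have hch : w x y - (N - h) ≤ Ch x + Ch y := hCh x hx y hy
    have hn0' : n0 = N - h := hn0
    obtain ⟨hdx, hx2⟩ := hpx
    obtain ⟨hdy, hy2⟩ := hpy
    rcases hx2 with hx2 | hx2 <;> rcases hy2 with hy2 | hy2 <;> omega
  -- same weight as C0
  have hwt : coverWt X Y C1 = coverWt X Y C0 := by
    have hedge : ∀ e ∈ M, C1 e.1 + C1 e.2 = C0 e.1 + C0 e.2 := by
      intro e he
      have hv1 := (hval e he).1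
      have hv2 := (hval e he).2
      have hk := hkey e he
      omega
    unfold coverWt
    rw [← Finset.sum_sdiff hsub, ← Finset.sum_sdiff (f := C0) hsub]
    congr 1
    · exact Finset.sum_congr rfl fun u hu => hvalu u (Finset.mem_sdiff.mp hu).2
    · rw [matched_sum_eq hM.2 hdisj C1, matched_sum_eq hM.2 hdisj C0]
      exact Finset.sum_congr rfl hedge
  exact ⟨C1, hcover, fun C' hC' => by rw [hwt]; exact hC0min C' hC',
    fun u hu => (hprops u hu).1⟩
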